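/- arXiv:2311.06165 — 2 statements merged into one kernel-verified Lean document; each statement's English description precedes it below -/
import Mathlib

section
/- Fix μ ≤ 1, R > 0, r ≥ 0. For ξ ∈ [0, π], ρ(ξ) = μR(cos ξ + √(cos²ξ − 1 + (R+r)²/(μ²R²))) satisfies ρ(ξ) ≥ (1−μ)R + r > r whenever μ < 1; in particular the EZ boundary lies strictly outside the capture disk of radius r when R > 0 and μ < 1. -/
open Real Set

noncomputable def rho (μ R r ξ : ℝ) : ℝ :=
  μ * R * (Real.cos ξ + Real.sqrt ((Real.cos ξ)^2 - 1 + (R + r)^2 / (μ^2 * R^2)))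

theorem stmt_4 (μ R r : ℝ) (hμ0 : 0 < μ) (hμ1 : μ < 1) (hR : 0 < R) (hr : 0 ≤ r) :
    (∀ ξ ∈ Set.Icc 0 Real.pi, (1 - μ) * R + r ≤ rho μ R r ξ) ∧
    r < (1 - μ) * R + r := by
  constructor
  · intro ξ _
    set c := Real.cos ξ with hc
    have hc1 : -1 ≤ c := Real.neg_one_le_cos ξ
    have hc2 : c ≤ 1 := Real.cos_le_one ξ
    set X := c^2 - 1 + (R + r)^2 / (μ^2 * R^2) with hXdef
    have hne : μ^2 * R^2 ≠ 0 := by positivity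
    have hX : μ^2 * R^2 * X = μ^2 * R^2 * (c^2 - 1) + (R + r)^2 := by
      rw [hXdef]; field_simp
    have hpos : 0 < μ^2 * R^2 := by positivity
    have ha : 0 < R + r - μ*R := by nlinarith
    have hb : 0 < R + r + μ*R := by positivity
    have h2 : 0 ≤ μ^2 * R^2 * X := by
      nlinarith [mul_pos ha hb, mul_nonneg hpos.le (sq_nonneg c)]
    have hX0 : 0 ≤ X := by
      by_contra h
      push_neg at h
      nlinarith [mul_neg_of_pos_of_neg hpos h]
    set s := Real.sqrt X with hs
    have hs2 : s^2 = X := Real.sq_sqrt hX0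
    have hs0 : 0 ≤ s := Real.sqrt_nonneg X
    have hkey : (μ*R*s)^2 = μ^2*R^2*c^2 - μ^2*R^2 + (R+r)^2 := by
      linear_combination μ^2*R^2*hs2 + hX
    have hs0' : 0 ≤ μ*R*s := by positivity
    have hterm : 0 ≤ (1 + c) * ((1-μ)*R + r) * (μ*R) := by
      apply mul_nonneg (mul_nonneg (by linarith) (by nlinarith)) (by positivity)
    show (1 - μ) * R + r ≤ μ * R * (c + s)
    nlinarith [hkey, hs0', hterm, mul_pos hμ0 hR]
  · nlinarith
end

section
/- Let μ ≤ 1, R > 0, r ≥ 0, ξ ∈ [−π, π], and let ρ = μR(cos ξ + √(cos²ξ − 1 + (R+r)²/(μ²R²))). If an Agent starts at distance d > ρ from P₀ with aspect angle ξ and both agents move in straight lines (Agent at speed μ v_P along its heading, Pursuer at speed v_P toward any fixed interception point), then any point at which the Pursuer comes within r of the Agent requires Pursuer travel distance > R. -/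
open Real Set Complex

set_option maxHeartbeats 1000000 in
private lemma mono_aux (μ r L R c s : ℝ) (hμ0 : 0 < μ) (hμ1 : μ ≤ 1) (hr : 0 ≤ r)
    (hL0 : 0 ≤ L) (hLR : L ≤ R) (hcs : s^2 + c^2 = 1) :
    μ*L*c + Real.sqrt ((L+r)^2 - μ^2*L^2*s^2) ≤
      μ*R*c + Real.sqrt ((R+r)^2 - μ^2*R^2*s^2) := by
  have hR0 : 0 ≤ R := le_trans hL0 hLR
  have hmu2 : (0:ℝ) ≤ 1 - μ^2 := by nlinarith
  have hs1 : s^2 ≤ 1 := by nlinarith [sq_nonneg c]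
  have hXL : 0 ≤ (L+r)^2 - μ^2*L^2*s^2 := by
    nlinarith [mul_nonneg hL0 hr, sq_nonneg r, mul_nonneg (mul_nonneg hmu2 (sq_nonneg L)) (sub_nonneg.2 hs1), mul_nonneg (sq_nonneg L) (sub_nonneg.2 hs1), sq_nonneg (L*s)]
  have hXR : 0 ≤ (R+r)^2 - μ^2*R^2*s^2 := by
    nlinarith [mul_nonneg hR0 hr, sq_nonneg r, mul_nonneg (mul_nonneg hmu2 (sq_nonneg R)) (sub_nonneg.2 hs1), mul_nonneg (sq_nonneg R) (sub_nonneg.2 hs1), sq_nonneg (R*s)]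
  set SL := Real.sqrt ((L+r)^2 - μ^2*L^2*s^2) with hSL
  set SR := Real.sqrt ((R+r)^2 - μ^2*R^2*s^2) with hSR
  have hSL0 : 0 ≤ SL := Real.sqrt_nonneg _
  have hSR0 : 0 ≤ SR := Real.sqrt_nonneg _
  set a := 1 - μ^2*s^2 with ha
  have hSL2 : SL^2 = a*L^2 + 2*L*r + r^2 := by
    rw [hSL, Real.sq_sqrt hXL]; ring
  have hSR2 : SR^2 = a*R^2 + 2*R*r + r^2 := by
    rw [hSR, Real.sq_sqrt hXR]; ring
  have ha0 : 0 ≤ a := by nlinarith [sq_nonneg (μ*s), mul_nonneg (sq_nonneg μ) (sq_nonneg s)]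
  have ha1 : a ≤ 1 := by nlinarith [sq_nonneg (μ*s)]
  have hac : μ^2*c^2 ≤ a := by nlinarith [mul_nonneg hmu2 (sub_nonneg.2 hs1), sq_nonneg c]
  rcases le_or_gt 0 c with hc | hc
  · have h1 : SL ≤ SR := by
      apply Real.sqrt_le_sqrt
      nlinarith [mul_nonneg (mul_nonneg ha0 (sub_nonneg.2 hLR)) (by linarith : (0:ℝ) ≤ R + L), mul_nonneg (sub_nonneg.2 hLR) hr]
    have h2 : μ*L*c ≤ μ*R*c := by
      have h := mul_nonneg (mul_nonneg hμ0.le hc) (sub_nonneg.2 hLR); nlinarith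
    linarith
  · have hmc : 0 ≤ μ*(-c) := mul_nonneg hμ0.le (by linarith)
    have hkey : μ*(-c)*SL ≤ a*L + r := by
      have haLr : 0 ≤ a*L + r := by positivity
      have h1 : (μ*(-c)*SL)^2 ≤ (a*L+r)^2 := by
        have e1 : (μ*(-c)*SL)^2 = (μ^2*c^2)*(a*L^2) + (μ^2*c^2)*(2*L*r) + (μ^2*c^2)*r^2 := by
          rw [mul_pow, mul_pow, hSL2]; ring
        have t1 : (μ^2*c^2)*(a*L^2) ≤ a*(a*L^2) :=
          mul_le_mul_of_nonneg_right hac (by positivity)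
        have t2 : (μ^2*c^2)*(2*L*r) ≤ a*(2*L*r) :=
          mul_le_mul_of_nonneg_right hac (by positivity)
        have t3 : (μ^2*c^2)*r^2 ≤ 1*r^2 :=
          mul_le_mul_of_nonneg_right (le_trans hac ha1) (sq_nonneg r)
        calc (μ*(-c)*SL)^2 = (μ^2*c^2)*(a*L^2) + (μ^2*c^2)*(2*L*r) + (μ^2*c^2)*r^2 := e1
          _ ≤ a*(a*L^2) + a*(2*L*r) + 1*r^2 := by linarith
          _ = (a*L+r)^2 := by ring
      nlinarith [mul_nonneg hmc hSL0]
    have hsq : (SL + μ*(-c)*(R-L))^2 ≤ (R+r)^2 - μ^2*R^2*s^2 := by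
      have hRL : 0 ≤ R - L := sub_nonneg.2 hLR
      have t1 : (R-L)*(μ*(-c)*SL) ≤ (R-L)*(a*L+r) :=
        mul_le_mul_of_nonneg_left hkey hRL
      have t2 : (μ^2*c^2)*(R-L)^2 ≤ a*(R-L)^2 :=
        mul_le_mul_of_nonneg_right hac (sq_nonneg _)
      have e2 : (R+r)^2 - μ^2*R^2*s^2 = a*R^2 + 2*R*r + r^2 := by ring
      rw [e2]
      nlinarith [hSL2]
    have h2 : SL + μ*(-c)*(R-L) ≤ SR := by
      have h3 : 0 ≤ SL + μ*(-c)*(R-L) := by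
        have := mul_nonneg hmc (sub_nonneg.2 hLR); linarith
      calc SL + μ*(-c)*(R-L) = Real.sqrt ((SL + μ*(-c)*(R-L))^2) := (Real.sqrt_sq h3).symm
        _ ≤ SR := Real.sqrt_le_sqrt hsq
    linarith

private lemma rho_eq (μ R r ξ : ℝ) (hμ0 : 0 < μ) (hR : 0 < R) :
    rho μ R r ξ = μ*R*Real.cos ξ +
      Real.sqrt ((R+r)^2 - μ^2*R^2*(Real.sin ξ)^2) := by
  have hμR : 0 < μ * R := mul_pos hμ0 hR
  have h1 : μ*R*Real.sqrt ((Real.cos ξ)^2 - 1 + (R + r)^2 / (μ^2 * R^2))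
      = Real.sqrt ((μ*R)^2 * ((Real.cos ξ)^2 - 1 + (R + r)^2 / (μ^2 * R^2))) := by
    rw [Real.sqrt_mul (sq_nonneg _), Real.sqrt_sq hμR.le]
  have h2 : (μ*R)^2 * ((Real.cos ξ)^2 - 1 + (R + r)^2 / (μ^2 * R^2))
      = (R+r)^2 - μ^2*R^2*(Real.sin ξ)^2 := by
    have hs := Real.sin_sq_add_cos_sq ξ
    field_simp
    linear_combination (μ^2*R^2)*hs
  rw [rho, mul_add, h1, h2]

private lemma norm_sq_A (μ v_P d ξ : ℝ) (A : ℝ → ℂ)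
    (hA : ∀ t, A t = (d : ℂ) + (μ * v_P * t) •
      Complex.exp ((Real.pi - ξ) * Complex.I)) (t : ℝ) :
    ‖A t‖^2 = (d - μ*(v_P*t)*Real.cos ξ)^2 + (μ*(v_P*t)*Real.sin ξ)^2 := by
  have hre : (A t).re = d - μ*(v_P*t)*Real.cos ξ := by
    rw [hA]
    simp [Complex.exp_mul_I, ← Complex.ofReal_sub, Complex.cos_ofReal_re, Complex.sin_ofReal_re, Real.cos_pi_sub, Real.sin_pi_sub]
    ring
  have him : (A t).im = μ*(v_P*t)*Real.sin ξ := by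
    rw [hA]
    simp [Complex.exp_mul_I, ← Complex.ofReal_sub, Complex.cos_ofReal_re, Complex.sin_ofReal_re, Real.cos_pi_sub, Real.sin_pi_sub]
    left; ring
  rw [Complex.sq_norm, Complex.normSq_apply, hre, him]
  ring

/-- With the Pursuer starting at the origin, the Agent at distance `d > ρ(ξ)`
on the positive real axis, moving with speed `μ v_P` at aspect angle `ξ` to the
line of sight (direction `π - ξ` from the positive x-axis), any point reachable
by the Pursuer (travel distance `≤ v_P t`) that is within `r` of the Agent at
time `t` requires Pursuer travel distance exceeding `R`. -/
theorem stmt_19 (μ R r ξ v_P d : ℝ) (hμ0 : 0 < μ) (hμ1 : μ ≤ 1) (hR : 0 < R)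
    (hr : 0 ≤ r) (hξ : ξ ∈ Set.Icc (-Real.pi) Real.pi) (hv : 0 < v_P)
    (hd : rho μ R r ξ < d)
    (A : ℝ → ℂ)
    (hA : ∀ t, A t = (d : ℂ) + (μ * v_P * t) •
      Complex.exp ((Real.pi - ξ) * Complex.I)) :
    ∀ (t : ℝ) (Q : ℂ), 0 ≤ t → ‖Q‖ ≤ v_P * t → ‖A t - Q‖ ≤ r →
      R < v_P * t := by
  intro t Q ht hQ hAQ
  by_contra hcon
  push_neg at hcon
  have hL0 : 0 ≤ v_P * t := mul_nonneg hv.le ht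
  have hnorm : ‖A t‖ ≤ v_P * t + r := by
    have h1 : ‖A t‖ ≤ ‖A t - Q‖ + ‖Q‖ := by
      simpa using norm_add_le (A t - Q) Q
    linarith
  have hsq : ‖A t‖^2 ≤ (v_P * t + r)^2 :=
    pow_le_pow_left₀ (norm_nonneg _) hnorm 2
  rw [norm_sq_A μ v_P d ξ A hA t] at hsq
  have hcs := Real.sin_sq_add_cos_sq ξ
  have hmono := mono_aux μ r (v_P*t) R (Real.cos ξ) (Real.sin ξ)
    hμ0 hμ1 hr hL0 hcon hcs
  rw [rho_eq μ R r ξ hμ0 hR] at hd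
  have hmu2 : (0:ℝ) ≤ 1 - μ^2 := by nlinarith
  have hs1 : (Real.sin ξ)^2 ≤ 1 := by nlinarith [sq_nonneg (Real.cos ξ)]
  have hXL : 0 ≤ (v_P*t+r)^2 - μ^2*(v_P*t)^2*(Real.sin ξ)^2 := by
    nlinarith [mul_nonneg hL0 hr, sq_nonneg r,
      mul_nonneg (mul_nonneg hmu2 (sq_nonneg (v_P*t))) (sub_nonneg.2 hs1),
      mul_nonneg (sq_nonneg (v_P*t)) (sub_nonneg.2 hs1), sq_nonneg ((v_P*t)*Real.sin ξ)]
  set SL := Real.sqrt ((v_P*t+r)^2 - μ^2*(v_P*t)^2*(Real.sin ξ)^2) with hSL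
  have hSL0 : 0 ≤ SL := Real.sqrt_nonneg _
  have hSL2 : SL^2 = (v_P*t+r)^2 - μ^2*(v_P*t)^2*(Real.sin ξ)^2 := Real.sq_sqrt hXL
  have hdL : SL < d - μ*(v_P*t)*Real.cos ξ := by linarith
  nlinarith [mul_self_lt_mul_self hSL0 hdL, hSL2, hsq, sq_nonneg (μ*(v_P*t)*Real.sin ξ)]
end
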